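/- If k ≥ 3 and n > k(k+2) (with k < n/2), then the generalized Petersen graph GP(n,k) is not distance-balanced. -/

import Mathlib

/-- The generalized Petersen graph `GP(n,k)`: vertices are `Sum.inl i` (the outer
vertices `u_i`) and `Sum.inr i` (the inner vertices `v_i`) for `i ∈ ZMod n`, with
edges `u_i u_{i+1}`, `v_i v_{i+k}` and spokes `u_i v_i`. -/
def genPetersen (n k : ℕ) : SimpleGraph (ZMod n ⊕ ZMod n) :=
  SimpleGraph.fromRel (fun x y =>
    match x, y with
    | Sum.inl i, Sum.inl j => j = i + 1
    | Sum.inr i, Sum.inr j => j = i + (k : ZMod n)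
    | Sum.inl i, Sum.inr j => i = j
    | _, _ => False)

/-- `W_{xy}`: the set of vertices strictly closer to `x` than to `y`. -/
def closerSet {V : Type*} (G : SimpleGraph V) (x y : V) : Set V :=
  {w | G.dist w x < G.dist w y}

/-- `_xW_y`: the set of vertices equidistant from `x` and `y`. -/
def eqDistSet {V : Type*} (G : SimpleGraph V) (x y : V) : Set V :=
  {w | G.dist w x = G.dist w y}

/-- A graph is `ℓ`-distance-balanced if every pair of vertices at distance `ℓ`
is balanced. -/
def IsLDistBalanced {V : Type*} (G : SimpleGraph V) (ℓ : ℕ) : Prop :=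
  ∀ x y : V, G.dist x y = ℓ → (closerSet G x y).ncard = (closerSet G y x).ncard

/-- A graph is distance-balanced if every pair of adjacent vertices is balanced. -/
def IsDistBalanced {V : Type*} (G : SimpleGraph V) : Prop :=
  ∀ x y : V, G.Adj x y → (closerSet G x y).ncard = (closerSet G y x).ncard

namespace GPaux
open SimpleGraph

variable {n k : ℕ}

/- ### basic adjacency -/

lemma one_ne_zero_zmod (hn1 : 1 < n) : (1 : ZMod n) ≠ 0 := by
  intro h
  have := (ZMod.natCast_eq_zero_iff 1 n).mp (by exact_mod_cast h)
  have := Nat.le_of_dvd one_pos this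
  omega

lemma adj_out (hn1 : 1 < n) (i : ZMod n) :
    (genPetersen n k).Adj (Sum.inl i) (Sum.inl (i + 1)) := by
  refine ⟨?_, Or.inl rfl⟩
  intro h
  have h2 : i = i + 1 := Sum.inl.inj h
  exact one_ne_zero_zmod hn1 (left_eq_add.mp h2)

lemma adj_in (hk0 : 0 < k) (hkn : k < n) (i : ZMod n) :
    (genPetersen n k).Adj (Sum.inr i) (Sum.inr (i + (k : ZMod n))) := by
  refine ⟨?_, Or.inl rfl⟩
  intro h
  have h2 : i = i + (k : ZMod n) := Sum.inr.inj h
  have h3 : (k : ZMod n) = 0 := (left_eq_add.mp h2)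
  have := (ZMod.natCast_eq_zero_iff k n).mp h3
  have := Nat.le_of_dvd (by omega) this
  omega

lemma adj_spoke (i : ZMod n) :
    (genPetersen n k).Adj (Sum.inl i) (Sum.inr i) :=
  ⟨by simp, Or.inl rfl⟩

lemma adj_cases {x y : ZMod n ⊕ ZMod n} (h : (genPetersen n k).Adj x y) :
    (∃ i, x = Sum.inl i ∧ y = Sum.inl (i + 1)) ∨
    (∃ i, x = Sum.inl (i + 1) ∧ y = Sum.inl i) ∨
    (∃ i, x = Sum.inr i ∧ y = Sum.inr (i + (k : ZMod n))) ∨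
    (∃ i, x = Sum.inr (i + (k : ZMod n)) ∧ y = Sum.inr i) ∨
    (∃ i, x = Sum.inl i ∧ y = Sum.inr i) ∨
    (∃ i, x = Sum.inr i ∧ y = Sum.inl i) := by
  obtain ⟨-, h⟩ := h
  rcases x with i | i <;> rcases y with j | j <;> simp only at h
  · rcases h with h | h
    · exact Or.inl ⟨i, rfl, by rw [h]⟩
    · exact Or.inr (Or.inl ⟨j, by rw [h], rfl⟩)
  · rcases h with h | h
    · exact Or.inr (Or.inr (Or.inr (Or.inr (Or.inl ⟨i, rfl, by rw [h]⟩))))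
    · exact h.elim
  · rcases h with h | h
    · exact h.elim
    · exact Or.inr (Or.inr (Or.inr (Or.inr (Or.inr ⟨i, rfl, by rw [h]⟩))))
  · rcases h with h | h
    · exact Or.inr (Or.inr (Or.inl ⟨i, rfl, by rw [h]⟩))
    · exact Or.inr (Or.inr (Or.inr (Or.inl ⟨j, by rw [h], rfl⟩)))

/- ### walks and upper bounds -/

lemma walk_out (hn1 : 1 < n) : ∀ (m : ℕ) (i : ZMod n),
    ∃ p : (genPetersen n k).Walk (Sum.inl i) (Sum.inl (i + (m : ZMod n))), p.length = m
  | 0, i => ⟨Walk.nil.copy rfl (by simp), by simp⟩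
  | (m+1), i => by
      obtain ⟨p, hp⟩ := walk_out hn1 m (i + 1)
      refine ⟨(Walk.cons (adj_out hn1 i) p).copy rfl (by push_cast; ring_nf), by simp [hp]⟩

lemma walk_in (hk0 : 0 < k) (hkn : k < n) : ∀ (m : ℕ) (i : ZMod n),
    ∃ p : (genPetersen n k).Walk (Sum.inr i) (Sum.inr (i + (m : ZMod n) * k)), p.length = m
  | 0, i => ⟨Walk.nil.copy rfl (by simp), by simp⟩
  | (m+1), i => by
      obtain ⟨p, hp⟩ := walk_in hk0 hkn m (i + (k : ZMod n))
      refine ⟨(Walk.cons (adj_in hk0 hkn i) p).copy rfl (by push_cast; ring_nf), by simp [hp]⟩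

lemma walk_out_int (hn1 : 1 < n) (b : ℤ) (i : ZMod n) :
    ∃ p : (genPetersen n k).Walk (Sum.inl i) (Sum.inl (i + (b : ZMod n))), p.length = b.natAbs := by
  rcases Int.natAbs_eq b with h | h
  · obtain ⟨p, hp⟩ := walk_out (k := k) hn1 b.natAbs i
    have e : ((b.natAbs : ℕ) : ZMod n) = ((b : ℤ) : ZMod n) := by
      rw [← Int.cast_natCast, ← h]
    exact ⟨p.copy rfl (by rw [e]), by simp [hp]⟩
  · obtain ⟨p, hp⟩ := walk_out (k := k) hn1 b.natAbs (i + (b : ZMod n))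
    have hb : ((b.natAbs : ℤ)) = -b := by omega
    have e : ((b.natAbs : ℕ) : ZMod n) = -((b : ℤ) : ZMod n) := by
      rw [← Int.cast_natCast, hb, Int.cast_neg]
    have he : Sum.inl (α := ZMod n) (β := ZMod n) (i + (b:ZMod n) + ((b.natAbs : ℕ) : ZMod n)) =
        Sum.inl i := by rw [e]; congr 1; ring
    exact ⟨(p.copy rfl he).reverse, by simp [hp]⟩

lemma walk_in_int (hn1 : 1 < n) (hk0 : 0 < k) (hkn : k < n) (a : ℤ) (i : ZMod n) :
    ∃ p : (genPetersen n k).Walk (Sum.inr i) (Sum.inr (i + (a : ZMod n) * k)), p.length = a.natAbs := by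
  rcases Int.natAbs_eq a with h | h
  · obtain ⟨p, hp⟩ := walk_in (n := n) hk0 hkn a.natAbs i
    have e : ((a.natAbs : ℕ) : ZMod n) = ((a : ℤ) : ZMod n) := by
      rw [← Int.cast_natCast, ← h]
    exact ⟨p.copy rfl (by rw [e]), by simp [hp]⟩
  · obtain ⟨p, hp⟩ := walk_in (n := n) hk0 hkn a.natAbs (i + (a : ZMod n) * k)
    have ha : ((a.natAbs : ℤ)) = -a := by omega
    have e : ((a.natAbs : ℕ) : ZMod n) = -((a : ℤ) : ZMod n) := by
      rw [← Int.cast_natCast, ha, Int.cast_neg]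
    have he : Sum.inr (α := ZMod n) (β := ZMod n) (i + (a:ZMod n)*k + ((a.natAbs : ℕ) : ZMod n) * k) =
        Sum.inr i := by rw [e]; congr 1; ring
    exact ⟨(p.copy rfl he).reverse, by simp [hp]⟩

lemma dist_ub_v0 (hn1 : 1 < n) (hk0 : 0 < k) (hkn : k < n) (a b : ℤ) :
    (genPetersen n k).dist (Sum.inl ((a * k + b : ℤ) : ZMod n)) (Sum.inr (0 : ZMod n))
      ≤ a.natAbs + b.natAbs + 1 := by
  obtain ⟨p1, hp1⟩ := walk_out_int (k := k) hn1 (-b) ((a * k + b : ℤ) : ZMod n)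
  obtain ⟨p3, hp3⟩ := walk_in_int hn1 hk0 hkn (-a) ((a * k : ℤ) : ZMod n)
  have e1 : Sum.inl (α := ZMod n) (β := ZMod n) (((a * k + b : ℤ) : ZMod n) + ((-b : ℤ) : ZMod n)) =
      Sum.inl ((a * k : ℤ) : ZMod n) := by
    congr 1; push_cast; ring
  have e3 : Sum.inr (α := ZMod n) (β := ZMod n) (((a * k : ℤ) : ZMod n) + ((-a : ℤ) : ZMod n) * k) =
      Sum.inr (0 : ZMod n) := by
    congr 1; push_cast; ring
  have hd := dist_le ((p1.copy rfl e1).append (Walk.cons (adj_spoke _) (p3.copy rfl e3)))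
  simp only [Walk.length_append, Walk.length_copy, Walk.length_cons, hp1, hp3] at hd
  omega

lemma dist_ub_u0_outer (hn1 : 1 < n) (b : ℤ) :
    (genPetersen n k).dist (Sum.inl ((b : ℤ) : ZMod n)) (Sum.inl (0 : ZMod n)) ≤ b.natAbs := by
  obtain ⟨p, hp⟩ := walk_out_int (k := k) hn1 (-b) ((b : ℤ) : ZMod n)
  have e : Sum.inl (α := ZMod n) (β := ZMod n) (((b : ℤ) : ZMod n) + ((-b : ℤ) : ZMod n)) =
      Sum.inl (0 : ZMod n) := by congr 1; push_cast; ring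
  have hd := dist_le (p.copy rfl e)
  simp only [Walk.length_copy, hp] at hd
  omega

lemma dist_ub_v0_inner (hn1 : 1 < n) (hk0 : 0 < k) (hkn : k < n) (a : ℤ) :
    (genPetersen n k).dist (Sum.inr ((a * k : ℤ) : ZMod n)) (Sum.inr (0 : ZMod n)) ≤ a.natAbs := by
  obtain ⟨p, hp⟩ := walk_in_int hn1 hk0 hkn (-a) ((a * k : ℤ) : ZMod n)
  have e : Sum.inr (α := ZMod n) (β := ZMod n) (((a * k : ℤ) : ZMod n) + ((-a : ℤ) : ZMod n) * k) =
      Sum.inr (0 : ZMod n) := by congr 1; push_cast; ring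
  have hd := dist_le (p.copy rfl e)
  simp only [Walk.length_copy, hp] at hd
  omega

lemma reach_u0 (hn1 : 1 < n) (w : ZMod n ⊕ ZMod n) :
    (genPetersen n k).Reachable w (Sum.inl (0 : ZMod n)) := by
  haveI : NeZero n := ⟨by omega⟩
  have key : ∀ i : ZMod n, (genPetersen n k).Reachable (Sum.inl i) (Sum.inl (0 : ZMod n)) := by
    intro i
    obtain ⟨p, -⟩ := walk_out_int (k := k) hn1 (-(i.val : ℤ)) i
    have e : Sum.inl (α := ZMod n) (β := ZMod n) (i + ((-(i.val : ℤ) : ℤ) : ZMod n)) =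
        Sum.inl (0:ZMod n) := by
      congr 1
      push_cast
      rw [ZMod.natCast_rightInverse i]
      ring
    exact ⟨p.copy rfl e⟩
  rcases w with i | i
  · exact key i
  · exact (Reachable.mono le_rfl ⟨Walk.cons ((adj_spoke i).symm) Walk.nil⟩).trans (key i)

lemma reach_v0 (hn1 : 1 < n) (w : ZMod n ⊕ ZMod n) :
    (genPetersen n k).Reachable w (Sum.inr (0 : ZMod n)) :=
  (reach_u0 hn1 w).trans ⟨Walk.cons (adj_spoke 0) Walk.nil⟩


/- ### cost functions -/

def mSet (n k : ℕ) (x : ZMod n) : Set ℕ :=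
  {c | ∃ a b : ℤ, ((a * k + b : ℤ) : ZMod n) = x ∧ c = a.natAbs + b.natAbs}

def uSet (n k : ℕ) (x : ZMod n) : Set ℕ :=
  {c | ∃ a b : ℤ, ((a * k + b : ℤ) : ZMod n) = x ∧
        c = a.natAbs + b.natAbs + (if a = 0 then 0 else 2)}

def vSet (n k : ℕ) (x : ZMod n) : Set ℕ :=
  {c | ∃ a b : ℤ, ((a * k + b : ℤ) : ZMod n) = x ∧
        c = a.natAbs + b.natAbs + (if b = 0 then 0 else 2)}

noncomputable def mcost (n k : ℕ) (x : ZMod n) : ℕ := sInf (mSet n k x)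
noncomputable def ucost (n k : ℕ) (x : ZMod n) : ℕ := sInf (uSet n k x)
noncomputable def vcost (n k : ℕ) (x : ZMod n) : ℕ := sInf (vSet n k x)

/- ### cost sets -/


lemma mSet_nonempty [NeZero n] (x : ZMod n) : (mSet n k x).Nonempty := by
  refine ⟨(x.val : ℕ), 0, (x.val : ℤ), ?_, by omega⟩
  push_cast
  rw [ZMod.natCast_rightInverse x]
  ring

lemma uSet_nonempty [NeZero n] (x : ZMod n) : (uSet n k x).Nonempty := by
  refine ⟨(x.val : ℕ), 0, (x.val : ℤ), ?_, by rw [if_pos rfl]; omega⟩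
  push_cast
  rw [ZMod.natCast_rightInverse x]
  ring

lemma vSet_nonempty [NeZero n] (x : ZMod n) : (vSet n k x).Nonempty := by
  by_cases hx : x = 0
  · exact ⟨0, 0, 0, by simp [hx], by simp⟩
  · refine ⟨(x.val : ℕ) + 2, 0, (x.val : ℤ), ?_, ?_⟩
    · push_cast
      rw [ZMod.natCast_rightInverse x]
      ring
    · have hne : (x.val : ℤ) ≠ 0 := by
        simp only [ne_eq, Int.natCast_eq_zero]
        intro h
        exact hx ((ZMod.val_eq_zero x).mp h)
      rw [if_neg hne]; omega

lemma sInf_le_add {S T : Set ℕ} {d : ℕ} (hT : T.Nonempty)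
    (h : ∀ t ∈ T, ∃ s ∈ S, s ≤ t + d) : sInf S ≤ sInf T + d := by
  obtain ⟨s, hs, hle⟩ := h _ (Nat.sInf_mem hT)
  exact le_trans (Nat.sInf_le hs) hle

lemma mcost_zero [NeZero n] : mcost n k 0 = 0 := by
  have : (0 : ℕ) ∈ mSet n k 0 := ⟨0, 0, by push_cast; ring, by simp⟩
  exact Nat.eq_zero_of_le_zero (Nat.sInf_le this)

lemma ucost_zero [NeZero n] : ucost n k 0 = 0 := by
  have : (0 : ℕ) ∈ uSet n k 0 := ⟨0, 0, by push_cast; ring, by simp⟩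
  exact Nat.eq_zero_of_le_zero (Nat.sInf_le this)

lemma vcost_zero [NeZero n] : vcost n k 0 = 0 := by
  have : (0 : ℕ) ∈ vSet n k 0 := ⟨0, 0, by push_cast; ring, by simp⟩
  exact Nat.eq_zero_of_le_zero (Nat.sInf_le this)

lemma mcost_le_mcost_shift1 [NeZero n] (x : ZMod n) (ε : ℤ) (hε : ε.natAbs ≤ 1) :
    mcost n k x ≤ mcost n k (x + (ε : ZMod n)) + 1 := by
  apply sInf_le_add (mSet_nonempty _)
  rintro t ⟨a, b, hab, rfl⟩
  refine ⟨a.natAbs + (b - ε).natAbs, ⟨a, b - ε, ?_, rfl⟩, by omega⟩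
  push_cast
  push_cast at hab
  linear_combination hab

lemma mcost_le_mcost_shiftk [NeZero n] (x : ZMod n) (ε : ℤ) (hε : ε.natAbs ≤ 1) :
    mcost n k x ≤ mcost n k (x + (ε : ZMod n) * k) + 1 := by
  apply sInf_le_add (mSet_nonempty _)
  rintro t ⟨a, b, hab, rfl⟩
  refine ⟨(a - ε).natAbs + b.natAbs, ⟨a - ε, b, ?_, rfl⟩, by omega⟩
  push_cast
  push_cast at hab
  linear_combination hab

lemma ucost_le_ucost_shift1 [NeZero n] (x : ZMod n) (ε : ℤ) (hε : ε.natAbs ≤ 1) :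
    ucost n k x ≤ ucost n k (x + (ε : ZMod n)) + 1 := by
  apply sInf_le_add (uSet_nonempty _)
  rintro t ⟨a, b, hab, rfl⟩
  refine ⟨a.natAbs + (b - ε).natAbs + (if a = 0 then 0 else 2), ⟨a, b - ε, ?_, rfl⟩, by split <;> omega⟩
  push_cast
  push_cast at hab
  linear_combination hab

lemma vcost_le_vcost_shiftk [NeZero n] (x : ZMod n) (ε : ℤ) (hε : ε.natAbs ≤ 1) :
    vcost n k x ≤ vcost n k (x + (ε : ZMod n) * k) + 1 := by
  apply sInf_le_add (vSet_nonempty _)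
  rintro t ⟨a, b, hab, rfl⟩
  refine ⟨(a - ε).natAbs + b.natAbs + (if b = 0 then 0 else 2), ⟨a - ε, b, ?_, rfl⟩, by split <;> omega⟩
  push_cast
  push_cast at hab
  linear_combination hab

lemma mcost_le_ucost [NeZero n] (x : ZMod n) : mcost n k x ≤ ucost n k x := by
  have := sInf_le_add (S := mSet n k x) (T := uSet n k x) (d := 0) (uSet_nonempty x) ?_
  · simpa [mcost, ucost] using this
  rintro t ⟨a, b, hab, rfl⟩
  exact ⟨a.natAbs + b.natAbs, ⟨a, b, hab, rfl⟩, by split <;> omega⟩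

lemma ucost_le_mcost_add_two [NeZero n] (x : ZMod n) : ucost n k x ≤ mcost n k x + 2 := by
  apply sInf_le_add (mSet_nonempty _)
  rintro t ⟨a, b, hab, rfl⟩
  exact ⟨a.natAbs + b.natAbs + (if a = 0 then 0 else 2), ⟨a, b, hab, rfl⟩, by split <;> omega⟩

lemma mcost_le_vcost [NeZero n] (x : ZMod n) : mcost n k x ≤ vcost n k x := by
  have := sInf_le_add (S := mSet n k x) (T := vSet n k x) (d := 0) (vSet_nonempty x) ?_
  · simpa [mcost, vcost] using this
  rintro t ⟨a, b, hab, rfl⟩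
  exact ⟨a.natAbs + b.natAbs, ⟨a, b, hab, rfl⟩, by split <;> omega⟩

lemma vcost_le_mcost_add_two [NeZero n] (x : ZMod n) : vcost n k x ≤ mcost n k x + 2 := by
  apply sInf_le_add (mSet_nonempty _)
  rintro t ⟨a, b, hab, rfl⟩
  exact ⟨a.natAbs + b.natAbs + (if b = 0 then 0 else 2), ⟨a, b, hab, rfl⟩, by split <;> omega⟩

/- ### potentials -/

noncomputable def PhiU (n k : ℕ) : ZMod n ⊕ ZMod n → ℕ :=
  Sum.elim (fun x => ucost n k x) (fun x => mcost n k x + 1)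

noncomputable def PhiV (n k : ℕ) : ZMod n ⊕ ZMod n → ℕ :=
  Sum.elim (fun x => mcost n k x + 1) (fun x => vcost n k x)

section Lip
variable [NeZero n]

lemma shift1_cancel (i : ZMod n) : (i + 1) + ((-1 : ℤ) : ZMod n) = i := by push_cast; ring

lemma shiftk_cancel (i : ZMod n) : (i + (k : ZMod n)) + ((-1 : ℤ) : ZMod n) * k = i := by
  push_cast; ring

lemma phiU_lip : ∀ x y, (genPetersen n k).Adj x y → PhiU n k x ≤ PhiU n k y + 1 := by
  intro x y h
  rcases adj_cases h with ⟨i, rfl, rfl⟩ | ⟨i, rfl, rfl⟩ | ⟨i, rfl, rfl⟩ | ⟨i, rfl, rfl⟩ |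
    ⟨i, rfl, rfl⟩ | ⟨i, rfl, rfl⟩ <;> simp only [PhiU, Sum.elim_inl, Sum.elim_inr]
  · have := ucost_le_ucost_shift1 (k := k) i 1 (by norm_num)
    simpa using this
  · have := ucost_le_ucost_shift1 (k := k) (i + 1) (-1) (by norm_num)
    rwa [shift1_cancel] at this
  · have := mcost_le_mcost_shiftk (k := k) i 1 (by norm_num)
    have h2 : ((1 : ℤ) : ZMod n) * k = (k : ZMod n) := by push_cast; ring
    rw [h2] at this
    omega
  · have := mcost_le_mcost_shiftk (k := k) (i + (k : ZMod n)) (-1) (by norm_num)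
    rw [shiftk_cancel] at this
    omega
  · have := mcost_le_ucost (k := k) i
    have h2 := ucost_le_mcost_add_two (k := k) i
    omega
  · have := mcost_le_ucost (k := k) i
    omega

lemma phiV_lip : ∀ x y, (genPetersen n k).Adj x y → PhiV n k x ≤ PhiV n k y + 1 := by
  intro x y h
  rcases adj_cases h with ⟨i, rfl, rfl⟩ | ⟨i, rfl, rfl⟩ | ⟨i, rfl, rfl⟩ | ⟨i, rfl, rfl⟩ |
    ⟨i, rfl, rfl⟩ | ⟨i, rfl, rfl⟩ <;> simp only [PhiV, Sum.elim_inl, Sum.elim_inr]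
  · have := mcost_le_mcost_shift1 (k := k) i 1 (by norm_num)
    have h2 : ((1 : ℤ) : ZMod n) = 1 := by push_cast; ring
    rw [h2] at this
    omega
  · have := mcost_le_mcost_shift1 (k := k) (i + 1) (-1) (by norm_num)
    rw [shift1_cancel] at this
    omega
  · have := vcost_le_vcost_shiftk (k := k) i 1 (by norm_num)
    have h2 : ((1 : ℤ) : ZMod n) * k = (k : ZMod n) := by push_cast; ring
    rwa [h2] at this
  · have := vcost_le_vcost_shiftk (k := k) (i + (k : ZMod n)) (-1) (by norm_num)
    rwa [shiftk_cancel] at this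
  · have := mcost_le_vcost (k := k) i
    have h2 := vcost_le_mcost_add_two (k := k) i
    omega
  · have := mcost_le_vcost (k := k) i
    have h2 := vcost_le_mcost_add_two (k := k) i
    omega

omit [NeZero n] in
lemma phi_le_of_walk {f : ZMod n ⊕ ZMod n → ℕ}
    (hf : ∀ x y, (genPetersen n k).Adj x y → f x ≤ f y + 1)
    {u v : ZMod n ⊕ ZMod n} (p : (genPetersen n k).Walk u v) :
    f u ≤ f v + p.length := by
  induction p with
  | nil => simp
  | cons h p ih =>
      have := hf _ _ h
      simp only [SimpleGraph.Walk.length_cons]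
      omega

lemma dist_lb_u0 (hn1 : 1 < n) (w : ZMod n ⊕ ZMod n) :
    PhiU n k w ≤ (genPetersen n k).dist w (Sum.inl (0 : ZMod n)) := by
  obtain ⟨p, hp⟩ := (reach_u0 (k := k) hn1 w).exists_walk_length_eq_dist
  have := phi_le_of_walk (phiU_lip (n := n) (k := k)) p
  have h0 : PhiU n k (Sum.inl (0 : ZMod n)) = 0 := by simp [PhiU, ucost_zero]
  omega

lemma dist_lb_v0 (hn1 : 1 < n) (w : ZMod n ⊕ ZMod n) :
    PhiV n k w ≤ (genPetersen n k).dist w (Sum.inr (0 : ZMod n)) := by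
  obtain ⟨p, hp⟩ := (reach_v0 (k := k) hn1 w).exists_walk_length_eq_dist
  have := phi_le_of_walk (phiV_lip (n := n) (k := k)) p
  have h0 : PhiV n k (Sum.inr (0 : ZMod n)) = 0 := by simp [PhiV, vcost_zero]
  omega

end Lip

/- ### rep extraction and arithmetic -/

lemma rep_exists [NeZero n] {x : ZMod n} (t a b : ℤ) (hx : ((t : ℤ) : ZMod n) = x)
    (h : ((a * k + b : ℤ) : ZMod n) = x) : ∃ m : ℤ, a * k + b = t + m * n := by
  have h1 : ((a * k + b - t : ℤ) : ZMod n) = 0 := by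
    rw [Int.cast_sub, h, hx, sub_self]
  obtain ⟨m, hm⟩ := (ZMod.intCast_zmod_eq_zero_iff_dvd _ n).mp h1
  exact ⟨m, by linarith⟩

lemma cast_lb [NeZero n] (t b : ℤ) (h2t : 2 * t.natAbs ≤ n)
    (heq : ((b : ℤ) : ZMod n) = ((t : ℤ) : ZMod n)) : t.natAbs ≤ b.natAbs := by
  have h1 : ((b - t : ℤ) : ZMod n) = 0 := by
    rw [Int.cast_sub, heq, sub_self]
  obtain ⟨m, hm⟩ := (ZMod.intCast_zmod_eq_zero_iff_dvd _ n).mp h1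
  by_cases hm0 : m = 0
  · subst hm0
    omega
  · have h2 : ((n : ℤ) * m).natAbs = n * m.natAbs := by
      rw [Int.natAbs_mul, Int.natAbs_natCast]
    have h3 : n ≤ n * m.natAbs := Nat.le_mul_of_pos_right _ (by omega)
    have h4 : (b - t).natAbs = ((n:ℤ) * m).natAbs := by rw [hm]
    omega

lemma key_inner_arith (hk1 : 1 ≤ k) (T : ℕ) (hT1 : 1 ≤ T)
    (hn' : (k : ℤ) * (2 * T - 1) < n)
    (a₀ a b m : ℤ) (ht : a₀.natAbs ≤ T) (heq : a * k + b = a₀ * k + m * n) :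
    a₀.natAbs ≤ a.natAbs + b.natAbs := by
  by_cases hm : m = 0
  · subst hm
    have hb : b = (a₀ - a) * k := by linarith
    have hb2 : b.natAbs = (a₀ - a).natAbs * k := by
      rw [hb, Int.natAbs_mul, Int.natAbs_natCast]
    have h3 : (a₀ - a).natAbs ≤ (a₀ - a).natAbs * k :=
      Nat.le_mul_of_pos_right _ (by omega)
    omega
  · by_contra hcon
    push_neg at hcon
    set A := (a.natAbs : ℤ) with hA
    set B := (b.natAbs : ℤ) with hB
    set t := (a₀.natAbs : ℤ) with ht'
    have hk0 : (0:ℤ) ≤ k := by positivity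
    have hk1' : (1:ℤ) ≤ k := by exact_mod_cast hk1
    have hb1 : -B ≤ b ∧ b ≤ B := by omega
    have hb2 : -A ≤ a ∧ a ≤ A := by omega
    have hb3 : -t ≤ a₀ ∧ a₀ ≤ t := by omega
    have hAB : A + B + 1 ≤ t := by omega
    have htT : t ≤ (T:ℤ) := by omega
    have hak1 : a * k ≤ A * k := mul_le_mul_of_nonneg_right hb2.2 hk0
    have hak2 : -(A * k) ≤ a * k := by
      have := mul_le_mul_of_nonneg_right hb2.1 hk0
      linarith
    have ha01 : a₀ * k ≤ t * k := mul_le_mul_of_nonneg_right hb3.2 hk0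
    have ha02 : -(t * k) ≤ a₀ * k := by
      have := mul_le_mul_of_nonneg_right hb3.1 hk0
      linarith
    have hup : m * n ≤ A * k + B + t * k := by linarith
    have hlo : -(A * k + B + t * k) ≤ m * n := by linarith
    have hnk : (0:ℤ) < n := by
      have h1 : (1:ℤ) ≤ 2 * (T:ℤ) - 1 := by
        have : (1:ℤ) ≤ T := by exact_mod_cast hT1
        linarith
      have : (1:ℤ) * 1 ≤ (k:ℤ) * (2 * T - 1) := mul_le_mul hk1' h1 one_pos.le hk0
      linarith
    have hmn : (n:ℤ) ≤ A * k + B + t * k := by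
      rcases lt_trichotomy m 0 with h | h | h
      · have h1 : m ≤ -1 := by omega
        have : m * n ≤ (-1) * n := mul_le_mul_of_nonneg_right h1 (by linarith)
        linarith
      · exact absurd h hm
      · have h1 : 1 ≤ m := by omega
        have : (1:ℤ) * n ≤ m * n := mul_le_mul_of_nonneg_right h1 (by linarith)
        linarith
    have hc1 : (k:ℤ) * (2*t - 1) ≤ (k:ℤ) * (2*(T:ℤ) - 1) :=
      mul_le_mul_of_nonneg_left (by linarith) hk0
    have hBle : B ≤ t - 1 - A := by omega
    have hkk : (t - 1 - A) * 1 ≤ (t - 1 - A) * k :=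
      mul_le_mul_of_nonneg_left hk1' (by linarith)
    linarith

lemma key_eq_arith (hk : 4 ≤ k) (hke : k % 2 = 0) (hn : k * (k + 2) < n)
    (a b m : ℤ) (ha : a ≠ 0) (heq : a * k + b = (k / 2 + 1 : ℕ) + m * n) :
    k / 2 ≤ a.natAbs + b.natAbs := by
  set s : ℤ := ((k / 2 + 1 : ℕ) : ℤ) with hs
  have hseq : 2 * s = (k:ℤ) + 2 := by rw [hs]; push_cast; omega
  have hk' : (4:ℤ) ≤ k := by exact_mod_cast hk
  have hn' : (k:ℤ) * (k + 2) < n := by exact_mod_cast hn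
  set A := (a.natAbs : ℤ) with hA
  set B := (b.natAbs : ℤ) with hB
  have hk0 : (0:ℤ) ≤ k := by positivity
  have hb1 : -B ≤ b ∧ b ≤ B := by omega
  have hb2 : -A ≤ a ∧ a ≤ A := by omega
  have ha1 : 1 ≤ A := by omega
  have hs0 : (3:ℤ) ≤ s := by linarith
  have hak1 : a * k ≤ A * k := mul_le_mul_of_nonneg_right hb2.2 hk0
  have hak2 : -(A * k) ≤ a * k := by
    have := mul_le_mul_of_nonneg_right hb2.1 hk0
    linarith
  have hgoal : (k:ℤ) ≤ 2 * (A + B) → k / 2 ≤ a.natAbs + b.natAbs := by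
    intro h
    have : (k:ℤ) ≤ 2 * ((a.natAbs + b.natAbs : ℕ) : ℤ) := by
      push_cast
      push_cast [hA, hB] at h
      linarith
    have : k ≤ 2 * (a.natAbs + b.natAbs) := by exact_mod_cast this
    omega
  apply hgoal
  by_cases hm : m = 0
  · subst hm
    have hb : b = s - a * k := by linarith
    rcases le_or_gt 1 a with hap | han
    · have hAa : A = a := by omega
      have hBge : a * k - s ≤ B := by linarith
      have h1k : 1 * ((k:ℤ) + 1) ≤ a * (k + 1) :=
        mul_le_mul_of_nonneg_right hap (by linarith)
      have hexp : a * ((k:ℤ) + 1) = a * k + a := by ring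
      linarith
    · have han' : a ≤ -1 := by omega
      have h1 : a * k ≤ (-1) * k := mul_le_mul_of_nonneg_right (by omega : a ≤ -1) hk0
      have hBge : s + k ≤ B := by linarith
      linarith
  · have hnpos : (0:ℤ) < n := by nlinarith
    have hmn : (n:ℤ) ≤ A * k + B + s := by
      have h1 : m * n = a * k + b - s := by linarith
      have hup : m * n ≤ A * k + B + s := by linarith
      have hlo : -(A * k + B + s) ≤ m * n := by linarith
      rcases lt_trichotomy m 0 with h | h | h
      · have h2 : m ≤ -1 := by omega
        have : m * n ≤ (-1) * n := mul_le_mul_of_nonneg_right h2 (by linarith)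
        linarith
      · exact absurd h hm
      · have h2 : 1 ≤ m := by omega
        have : (1:ℤ) * n ≤ m * n := mul_le_mul_of_nonneg_right h2 (by linarith)
        linarith
    rcases le_or_gt s (A + 1) with h | h
    · linarith
    · have hA2 : A * k ≤ (s - 2) * k := mul_le_mul_of_nonneg_right (by linarith) hk0
      have h2sk : (2 * s) * k = ((k:ℤ) + 2) * k := by rw [hseq]
      have h3k : 3 * (k:ℤ) ≤ s * k := mul_le_mul_of_nonneg_right hs0 hk0
      linarith

/- ### the three membership lemmas -/

lemma mcost_inner_lb [NeZero n] (hk1 : 1 ≤ k) (T : ℕ) (hT1 : 1 ≤ T)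
    (hn' : (k : ℤ) * (2 * T - 1) < n) (a₀ : ℤ) (ht : a₀.natAbs ≤ T) :
    a₀.natAbs ≤ mcost n k ((a₀ * k : ℤ) : ZMod n) := by
  obtain ⟨a, b, hab, hc⟩ := Nat.sInf_mem (mSet_nonempty (n := n) (k := k) ((a₀ * k : ℤ) : ZMod n))
  obtain ⟨m, hm⟩ := rep_exists (a₀ * k) a b rfl hab
  have hc' : mcost n k ((a₀ * k : ℤ) : ZMod n) = a.natAbs + b.natAbs := hc
  rw [hc']
  exact key_inner_arith hk1 T hT1 hn' a₀ a b m ht hm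

lemma mcost_outer_ub [NeZero n] (x : ZMod n) :
    mcost n k x ≤ 1 + ((x.valMinAbs.natAbs : ℤ) - k).natAbs := by
  rcases le_or_gt 0 x.valMinAbs with h | h
  · have hmem : 1 + (x.valMinAbs - k).natAbs ∈ mSet n k x := by
      refine ⟨1, x.valMinAbs - k, ?_, by omega⟩
      have e : (1 * (k:ℤ) + (x.valMinAbs - k)) = x.valMinAbs := by ring
      rw [e, ZMod.coe_valMinAbs]
    have h1 : mcost n k x ≤ 1 + (x.valMinAbs - k).natAbs := Nat.sInf_le hmem
    have h2 : (x.valMinAbs - k).natAbs = ((x.valMinAbs.natAbs : ℤ) - k).natAbs := by omega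
    omega
  · have hmem : 1 + (x.valMinAbs + k).natAbs ∈ mSet n k x := by
      refine ⟨-1, x.valMinAbs + k, ?_, by omega⟩
      have e : ((-1) * (k:ℤ) + (x.valMinAbs + k)) = x.valMinAbs := by ring
      rw [e, ZMod.coe_valMinAbs]
    have h1 : mcost n k x ≤ 1 + (x.valMinAbs + k).natAbs := Nat.sInf_le hmem
    have h2 : (x.valMinAbs + k).natAbs = ((x.valMinAbs.natAbs : ℤ) - k).natAbs := by omega
    omega

lemma outer_good [NeZero n] (hn1 : 1 < n) (hk3 : 3 ≤ k) (hkn : k < n) (x : ZMod n)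
    (hs : k + 3 ≤ 2 * x.valMinAbs.natAbs) :
    (genPetersen n k).dist (Sum.inl x) (Sum.inr (0 : ZMod n)) <
      (genPetersen n k).dist (Sum.inl x) (Sum.inl (0 : ZMod n)) := by
  set s := x.valMinAbs.natAbs with hsdef
  have hs2 : 2 * s ≤ n := by
    have h := ZMod.natAbs_valMinAbs_le x
    omega
  have hM : mcost n k x + 2 ≤ s := by
    have h := mcost_outer_ub (k := k) x
    omega
  -- upper bound for dist to v0
  obtain ⟨a, b, hab, hc⟩ := Nat.sInf_mem (mSet_nonempty (n := n) (k := k) x)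
  have hub : (genPetersen n k).dist (Sum.inl x) (Sum.inr (0 : ZMod n)) ≤ mcost n k x + 1 := by
    have h := dist_ub_v0 hn1 (by omega) hkn a b
    rw [hab] at h
    have hc' : mcost n k x = a.natAbs + b.natAbs := hc
    omega
  -- lower bound for dist to u0
  have hlb : ucost n k x ≤ (genPetersen n k).dist (Sum.inl x) (Sum.inl (0 : ZMod n)) := by
    have := dist_lb_u0 (k := k) hn1 (Sum.inl x)
    simpa [PhiU] using this
  have hucost : mcost n k x + 2 ≤ ucost n k x := by
    obtain ⟨a', b', hab', hc'⟩ := Nat.sInf_mem (uSet_nonempty (n := n) (k := k) x)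
    have hc'' : ucost n k x = a'.natAbs + b'.natAbs + (if a' = 0 then 0 else 2) := hc'
    rw [hc'']
    by_cases ha' : a' = 0
    · subst ha'
      have hb' : ((b' : ℤ) : ZMod n) = ((x.valMinAbs : ℤ) : ZMod n) := by
        rw [ZMod.coe_valMinAbs]
        rw [← hab']
        norm_num
      have := cast_lb x.valMinAbs b' (by omega) hb'
      simp only [if_pos rfl]
      omega
    · have hmem : a'.natAbs + b'.natAbs ∈ mSet n k x := ⟨a', b', hab', rfl⟩
      have h5 : mcost n k x ≤ a'.natAbs + b'.natAbs := Nat.sInf_le hmem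
      rw [if_neg ha']
      omega
  omega

lemma inner_good [NeZero n] (hn1 : 1 < n) (hk1 : 1 ≤ k) (hkn : k < n) (T : ℕ) (hT1 : 1 ≤ T)
    (hn' : (k : ℤ) * (2 * T - 1) < n) (a₀ : ℤ) (ht : a₀.natAbs ≤ T) :
    (genPetersen n k).dist (Sum.inr ((a₀ * k : ℤ) : ZMod n)) (Sum.inr (0 : ZMod n)) <
      (genPetersen n k).dist (Sum.inr ((a₀ * k : ℤ) : ZMod n)) (Sum.inl (0 : ZMod n)) := by
  have hub := dist_ub_v0_inner hn1 (by omega) hkn a₀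
  have hlb : mcost n k ((a₀ * k : ℤ) : ZMod n) + 1 ≤
      (genPetersen n k).dist (Sum.inr ((a₀ * k : ℤ) : ZMod n)) (Sum.inl (0 : ZMod n)) := by
    have := dist_lb_u0 (k := k) hn1 (Sum.inr ((a₀ * k : ℤ) : ZMod n))
    simpa [PhiU] using this
  have := mcost_inner_lb hk1 T hT1 hn' a₀ ht
  omega

lemma resid_lb (s0 : ℕ) (h2 : 2 * s0 ≤ n) (b m : ℤ) (hb : b = s0 + m * n) :
    s0 ≤ b.natAbs := by
  by_cases hm : m = 0
  · subst hm
    omega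
  · have h3 : ((n : ℤ) * m).natAbs = n * m.natAbs := by
      rw [Int.natAbs_mul, Int.natAbs_natCast]
    have h4 : n ≤ n * m.natAbs := Nat.le_mul_of_pos_right _ (by omega)
    have h5 : (b - s0).natAbs = ((n:ℤ) * m).natAbs := by
      rw [show b - (s0:ℤ) = (n:ℤ) * m by linarith]
    omega

lemma eq_vertex [NeZero n] (hn1 : 1 < n) (hk : 4 ≤ k) (hke : k % 2 = 0)
    (hn : k * (k + 2) < n) (hkn : k < n) :
    (genPetersen n k).dist (Sum.inl (((k / 2 + 1 : ℕ) : ℤ) : ZMod n)) (Sum.inl (0 : ZMod n)) =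
      (genPetersen n k).dist (Sum.inl (((k / 2 + 1 : ℕ) : ℤ) : ZMod n)) (Sum.inr (0 : ZMod n)) := by
  set s0 : ℕ := k / 2 + 1 with hs0
  set x : ZMod n := (((s0 : ℕ) : ℤ) : ZMod n) with hx
  have h2s : 2 * s0 ≤ n := by
    have : k + 2 ≤ k * (k + 2) := Nat.le_mul_of_pos_left _ (by omega)
    omega
  -- upper bound to u0
  have h1 : (genPetersen n k).dist (Sum.inl x) (Sum.inl (0 : ZMod n)) ≤ s0 := by
    have h := dist_ub_u0_outer (k := k) hn1 ((s0 : ℕ) : ℤ)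
    rwa [Int.natAbs_natCast] at h
  -- upper bound to v0
  have h2 : (genPetersen n k).dist (Sum.inl x) (Sum.inr (0 : ZMod n)) ≤ s0 := by
    have h := dist_ub_v0 hn1 (by omega) hkn 1 (((s0 : ℕ) : ℤ) - k)
    have e : ((1 * (k:ℤ) + (((s0 : ℕ) : ℤ) - k) : ℤ) : ZMod n) = x := by
      rw [hx]; congr 1; ring
    rw [e] at h
    have : (1 : ℤ).natAbs + (((s0 : ℕ) : ℤ) - k).natAbs + 1 = s0 := by omega
    omega
  -- lower bounds via costs
  have hwit : ∀ c ∈ mSet n k x, s0 - 1 ≤ c := by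
    rintro c ⟨a, b, hab, rfl⟩
    obtain ⟨m, hm⟩ := rep_exists ((s0 : ℕ) : ℤ) a b rfl hab
    by_cases ha : a = 0
    · subst ha
      have := resid_lb s0 h2s b m (by linarith)
      omega
    · have := key_eq_arith hk hke hn a b m ha hm
      omega
  have hm_lb : s0 - 1 ≤ mcost n k x := by
    obtain ⟨a, b, hab, hc⟩ := Nat.sInf_mem (mSet_nonempty (n := n) (k := k) x)
    have hc' : mcost n k x = a.natAbs + b.natAbs := hc
    rw [hc']
    exact hwit _ ⟨a, b, hab, rfl⟩
  have hu_lb : s0 ≤ ucost n k x := by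
    obtain ⟨a, b, hab, hc⟩ := Nat.sInf_mem (uSet_nonempty (n := n) (k := k) x)
    have hc' : ucost n k x = a.natAbs + b.natAbs + (if a = 0 then 0 else 2) := hc
    rw [hc']
    obtain ⟨m, hm⟩ := rep_exists ((s0 : ℕ) : ℤ) a b rfl hab
    by_cases ha : a = 0
    · subst ha
      have := resid_lb s0 h2s b m (by linarith)
      simp only [if_pos rfl]
      omega
    · have := key_eq_arith hk hke hn a b m ha hm
      rw [if_neg ha]
      omega
  -- combine
  have hd1 : s0 ≤ (genPetersen n k).dist (Sum.inl x) (Sum.inl (0 : ZMod n)) := by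
    have := dist_lb_u0 (k := k) hn1 (Sum.inl x)
    simp only [PhiU, Sum.elim_inl] at this
    omega
  have hd2 : s0 ≤ (genPetersen n k).dist (Sum.inl x) (Sum.inr (0 : ZMod n)) := by
    have := dist_lb_v0 (k := k) hn1 (Sum.inl x)
    simp only [PhiV, Sum.elim_inl] at this
    omega
  omega

end GPaux


open GPaux SimpleGraph in
theorem stmt_2 (n k : ℕ) (hk : 3 ≤ k) (hn : k * (k + 2) < n) (hkn : 2 * k < n) :
    ¬ IsDistBalanced (genPetersen n k) := by
  intro hbal
  have hk2n : k + 2 ≤ k * (k + 2) := Nat.le_mul_of_pos_left _ (by omega)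
  have hn1 : 1 < n := by omega
  haveI : NeZero n := ⟨by omega⟩
  have hkltn : k < n := by omega
  -- the two sets
  set Wuv := closerSet (genPetersen n k) (Sum.inl (0 : ZMod n)) (Sum.inr (0 : ZMod n)) with hWuv
  set Wvu := closerSet (genPetersen n k) (Sum.inr (0 : ZMod n)) (Sum.inl (0 : ZMod n)) with hWvu
  have hbal' : Wuv.ncard = Wvu.ncard := hbal _ _ (adj_spoke 0)
  -- parameters
  set c1 : ℕ := (k + 2) / 2 with hc1
  set T : ℕ := (k + 3) / 2 with hT
  have hc1T : c1 + T = k + 2 := by omega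
  have hT1 : 1 ≤ T := by omega
  have hc1leT : c1 ≤ T := by omega
  have hkd : (k : ℤ) * (2 * (T : ℤ) - 1) < (n : ℤ) := by
    have h1 : k * (2 * T - 1) ≤ k * (k + 2) := Nat.mul_le_mul_left k (by omega)
    have h2 : ((k * (2 * T - 1) : ℕ) : ℤ) = (k : ℤ) * (2 * (T : ℤ) - 1) := by
      push_cast [Nat.cast_sub (by omega : 1 ≤ 2 * T)]
      ring
    have h3 : ((k * (2 * T - 1) : ℕ) : ℤ) < (n : ℤ) := by exact_mod_cast by omega
    omega
  -- finsets
  set OBf : Finset (ZMod n) := (Finset.Icc (-(c1 : ℤ)) (c1 : ℤ)).image (fun j => ((j : ℤ) : ZMod n)) with hOBf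
  set OGf : Finset (ZMod n ⊕ ZMod n) := (Finset.univ \ OBf).image Sum.inl with hOGf
  set IGf : Finset (ZMod n ⊕ ZMod n) :=
    (Finset.Icc (-(c1 : ℤ)) (T : ℤ)).image (fun a => Sum.inr ((a * k : ℤ) : ZMod n)) with hIGf
  -- injectivity of the inner map
  have hinj : Set.InjOn (fun a : ℤ => (Sum.inr ((a * k : ℤ) : ZMod n) : ZMod n ⊕ ZMod n))
      ↑(Finset.Icc (-(c1 : ℤ)) (T : ℤ)) := by
    intro a ha a' ha' heq
    simp only [Finset.coe_Icc, Set.mem_Icc] at ha ha'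
    have heq2 : ((a * k : ℤ) : ZMod n) = ((a' * k : ℤ) : ZMod n) := by
      exact Sum.inr.inj heq
    have h1 : (((a - a') * k : ℤ) : ZMod n) = 0 := by
      push_cast at heq2 ⊢
      rw [sub_mul]
      rw [heq2]
      ring
    obtain ⟨m, hm⟩ := (ZMod.intCast_zmod_eq_zero_iff_dvd _ n).mp h1
    have hD : (a - a').natAbs ≤ k + 2 := by omega
    have hDk : ((a - a') * k).natAbs = (a - a').natAbs * k := by
      rw [Int.natAbs_mul, Int.natAbs_natCast]
    have hDk2 : (a - a').natAbs * k ≤ (k + 2) * k := Nat.mul_le_mul_right k hD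
    have hkkn : (k + 2) * k < n := by
      have : (k + 2) * k = k * (k + 2) := Nat.mul_comm _ _
      omega
    by_cases hm0 : m = 0
    · subst hm0
      have : (a - a') * k = 0 := by omega
      have := Int.mul_eq_zero.mp this
      rcases this with h | h
      · omega
      · exfalso
        have : (k : ℤ) ≠ 0 := by exact_mod_cast (by omega : k ≠ 0)
        exact this h
    · exfalso
      have h3 : ((n : ℤ) * m).natAbs = n * m.natAbs := by
        rw [Int.natAbs_mul, Int.natAbs_natCast]
      have h4 : n ≤ n * m.natAbs := Nat.le_mul_of_pos_right _ (by omega)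
      have h5 : ((a - a') * k).natAbs = ((n : ℤ) * m).natAbs := by rw [hm]
      omega
  have hIGcard : IGf.card = k + 3 := by
    rw [hIGf, Finset.card_image_of_injOn hinj, Int.card_Icc]
    omega
  have hOBcard : OBf.card ≤ 2 * c1 + 1 := by
    refine le_trans Finset.card_image_le ?_
    rw [Int.card_Icc]
    omega
  have hOGcard : OGf.card = n - OBf.card := by
    rw [hOGf, Finset.card_image_of_injective _ Sum.inl_injective,
      Finset.card_sdiff_of_subset (Finset.subset_univ _), Finset.card_univ, ZMod.card]
  -- membership
  have hOG : ∀ w ∈ OGf, w ∈ Wvu := by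
    intro w hw
    simp only [hOGf, Finset.mem_image, Finset.mem_sdiff, Finset.mem_univ, true_and] at hw
    obtain ⟨xx, hxx, rfl⟩ := hw
    have hbig : k + 3 ≤ 2 * xx.valMinAbs.natAbs := by
      by_contra hsm
      push_neg at hsm
      apply hxx
      rw [hOBf]
      refine Finset.mem_image.mpr ⟨xx.valMinAbs, Finset.mem_Icc.mpr (by omega), ZMod.coe_valMinAbs xx⟩
    exact outer_good hn1 hk hkltn xx hbig
  have hIG : ∀ w ∈ IGf, w ∈ Wvu := by
    intro w hw
    simp only [hIGf, Finset.mem_image, Finset.mem_Icc] at hw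
    obtain ⟨a, ha, rfl⟩ := hw
    exact inner_good hn1 (by omega) hkltn T hT1 hkd a (by omega)
  have hdisj : Disjoint OGf IGf := by
    rw [Finset.disjoint_left]
    intro w hw hw2
    simp only [hOGf, hIGf, Finset.mem_image] at hw hw2
    obtain ⟨xx, -, rfl⟩ := hw
    obtain ⟨a, -, h⟩ := hw2
    exact Sum.inr_ne_inl h
  have hcard_le : n - (2 * c1 + 1) + (k + 3) ≤ Wvu.ncard := by
    have hsub : ↑(OGf ∪ IGf) ⊆ Wvu := by
      intro w hw
      rcases Finset.mem_union.mp (by exact_mod_cast hw) with h | h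
      · exact hOG w h
      · exact hIG w h
    have h1 := Set.ncard_le_ncard hsub (Set.toFinite _)
    rw [Set.ncard_coe_finset, Finset.card_union_of_disjoint hdisj] at h1
    omega
  -- global upper bound
  have hdisj2 : Disjoint Wuv Wvu := by
    rw [Set.disjoint_left]
    intro w hw hw'
    rw [hWuv] at hw
    rw [hWvu] at hw'
    simp only [closerSet, Set.mem_setOf_eq] at hw hw'
    omega
  have hcastV : Nat.card (ZMod n ⊕ ZMod n) = 2 * n := by
    rw [Nat.card_eq_fintype_card, Fintype.card_sum, ZMod.card]
    omega
  rcases Nat.even_or_odd k with hke | hko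
  · -- k even: use the equidistant vertex
    have hke' : k % 2 = 0 := Nat.even_iff.mp hke
    set E : Set (ZMod n ⊕ ZMod n) := {Sum.inl (((k / 2 + 1 : ℕ) : ℤ) : ZMod n)} with hE
    have heqv := eq_vertex hn1 (by omega) hke' hn hkltn
    have hdisjE : Disjoint (Wuv ∪ Wvu) E := by
      rw [Set.disjoint_left]
      intro w hw hw2
      rw [hE, Set.mem_singleton_iff] at hw2
      subst hw2
      rcases hw with hw | hw
      · rw [hWuv] at hw
        simp only [closerSet, Set.mem_setOf_eq] at hw
        omega
      · rw [hWvu] at hw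
        simp only [closerSet, Set.mem_setOf_eq] at hw
        omega
    have htot : Wuv.ncard + Wvu.ncard + 1 ≤ 2 * n := by
      have h1 := Set.ncard_le_ncard (Set.subset_univ (Wuv ∪ Wvu ∪ E)) (Set.toFinite _)
      rw [Set.ncard_univ, hcastV] at h1
      rw [Set.ncard_union_eq hdisjE (Set.toFinite _) (Set.toFinite _),
        Set.ncard_union_eq hdisj2 (Set.toFinite _) (Set.toFinite _)] at h1
      simp only [hE, Set.ncard_singleton] at h1
      omega
    have hc1even : 2 * c1 + 1 = k + 3 := by omega
    omega
  · -- k odd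
    have hko' : k % 2 = 1 := Nat.odd_iff.mp hko
    have htot : Wuv.ncard + Wvu.ncard ≤ 2 * n := by
      have h1 := Set.ncard_le_ncard (Set.subset_univ (Wuv ∪ Wvu)) (Set.toFinite _)
      rw [Set.ncard_univ, hcastV] at h1
      rw [Set.ncard_union_eq hdisj2 (Set.toFinite _) (Set.toFinite _)] at h1
      omega
    have hc1odd : 2 * c1 + 1 = k + 2 := by omega
    omega
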